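/- The exact energy loss under the jump rule is given by the complementary projector: with Q = ωᵀ C⁻¹ ω g⁻¹ (so P + Q = I), for every p₋ ∈ ℝⁿ one has (P p₋)ᵀ g⁻¹ (P p₋) = p₋ᵀ g⁻¹ p₋ − (Q p₋)ᵀ g⁻¹ (Q p₋), and (Q p₋)ᵀ g⁻¹ (Q p₋) ≥ 0. -/

import Mathlib

open Matrix

/-- The exact energy loss under the jump rule is given by the complementary projector
`Q = ωᵀ C⁻¹ ω g⁻¹` (so that `P + Q = I`): for every pre-impact momentum `pm`,
`(P pm)ᵀ g⁻¹ (P pm) = pmᵀ g⁻¹ pm − (Q pm)ᵀ g⁻¹ (Q pm)`, and the loss term is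
nonnegative. -/
theorem energy_loss_via_complementary_projector
    {n s : ℕ} (hn : 0 < n) (hs : 0 < s)
    (g : Matrix (Fin n) (Fin n) ℝ) (hg : g.PosDef)
    (ω : Matrix (Fin s) (Fin n) ℝ) (hω : LinearIndependent ℝ (fun i => ω i))
    (C : Matrix (Fin s) (Fin s) ℝ) (hC : C = ω * g⁻¹ * ωᵀ)
    (P : Matrix (Fin n) (Fin n) ℝ) (hP : P = 1 - ωᵀ * C⁻¹ * ω * g⁻¹)
    (Q : Matrix (Fin n) (Fin n) ℝ) (hQ : Q = ωᵀ * C⁻¹ * ω * g⁻¹) :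
    ∀ pm : Fin n → ℝ,
      (P *ᵥ pm) ⬝ᵥ (g⁻¹ *ᵥ (P *ᵥ pm))
        = pm ⬝ᵥ (g⁻¹ *ᵥ pm) - (Q *ᵥ pm) ⬝ᵥ (g⁻¹ *ᵥ (Q *ᵥ pm)) ∧
      0 ≤ (Q *ᵥ pm) ⬝ᵥ (g⁻¹ *ᵥ (Q *ᵥ pm)) := by
  have hginv : g⁻¹.PosDef := hg.inv
  have hginvH : g⁻¹ᵀ = g⁻¹ := by
    have := hginv.isHermitian
    simpa [Matrix.IsHermitian] using this
  -- C is positive definite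
  have hCpd : C.PosDef := by
    rw [hC]
    refine posDef_iff_dotProduct_mulVec.mpr ⟨?_, ?_⟩
    · show (ω * g⁻¹ * ωᵀ)ᴴ = ω * g⁻¹ * ωᵀ
      simp [conjTranspose_mul, Matrix.mul_assoc, hginvH, (Matrix.conjTranspose_eq_transpose_of_trivial _)]
    · intro x hx
      have hxo : ωᵀ *ᵥ x ≠ 0 := by
        intro h
        apply hx
        have h' : ∑ i, x i • ω i = 0 := by
          funext j
          have := congrFun h j
          simpa [Matrix.mulVec, dotProduct, Finset.sum_apply, mul_comm] using this
        exact funext fun i =>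
          (Fintype.linearIndependent_iff.mp hω) x h' i
      have key : (star x) ⬝ᵥ ((ω * g⁻¹ * ωᵀ) *ᵥ x)
          = (star (ωᵀ *ᵥ x)) ⬝ᵥ (g⁻¹ *ᵥ (ωᵀ *ᵥ x)) := by
        simp only [star_trivial, ← Matrix.mulVec_mulVec]
        rw [Matrix.dotProduct_mulVec x, ← Matrix.mulVec_transpose]
      rw [key]
      exact hginv.dotProduct_mulVec_pos hxo
  have hCu : IsUnit C.det := C.isUnit_iff_isUnit_det.mp hCpd.isUnit
  have hCC : C⁻¹ * C = 1 := C.nonsing_inv_mul hCu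
  have hCsymm : C⁻¹ᵀ = C⁻¹ := by
    rw [C.transpose_nonsing_inv]
    congr 1
    rw [hC]
    simp [transpose_mul, Matrix.mul_assoc, hginvH]
  -- the key projector identity
  have hQtrans : Qᵀ = g⁻¹ * (ωᵀ * (C⁻¹ * ω)) := by
    rw [hQ]
    simp [transpose_mul, hginvH, hCsymm, Matrix.mul_assoc]
  have hmid : ∀ (X : Matrix (Fin s) (Fin n) ℝ),
      C⁻¹ * (ω * (g⁻¹ * (ωᵀ * X))) = X := by
    intro X
    have h1 : ω * (g⁻¹ * (ωᵀ * X)) = C * X := by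
      rw [hC]; simp [Matrix.mul_assoc]
    rw [h1, ← Matrix.mul_assoc, hCC, Matrix.one_mul]
  have hQT : Qᵀ * g⁻¹ = g⁻¹ * Q := by
    rw [hQtrans, hQ]
    simp [Matrix.mul_assoc]
  have hkey : Qᵀ * (g⁻¹ * Q) = g⁻¹ * Q := by
    rw [hQtrans, hQ]
    simp only [Matrix.mul_assoc]
    rw [hmid (C⁻¹ * (ω * g⁻¹))]
  intro pm
  set A := g⁻¹
  set q := Q *ᵥ pm with hq
  have hAq : q ⬝ᵥ (A *ᵥ q) = pm ⬝ᵥ (A *ᵥ q) := by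
    calc q ⬝ᵥ (A *ᵥ q) = pm ⬝ᵥ ((Qᵀ * (A * Q)) *ᵥ pm) := by
          rw [hq, Matrix.mulVec_mulVec, ← Matrix.vecMul_transpose,
            ← Matrix.dotProduct_mulVec, Matrix.mulVec_mulVec]
      _ = pm ⬝ᵥ ((A * Q) *ᵥ pm) := by rw [hkey]
      _ = pm ⬝ᵥ (A *ᵥ q) := by rw [← Matrix.mulVec_mulVec]
  have hAq' : q ⬝ᵥ (A *ᵥ pm) = pm ⬝ᵥ (A *ᵥ q) := by
    have h2 : (Q *ᵥ pm) ⬝ᵥ (A *ᵥ pm) = pm ⬝ᵥ ((A * Q) *ᵥ pm) := by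
      rw [← Matrix.vecMul_transpose, ← Matrix.dotProduct_mulVec,
        Matrix.mulVec_mulVec, hQT]
    rw [hq, h2, ← Matrix.mulVec_mulVec]
  constructor
  · have hPp : P *ᵥ pm = pm - q := by
      rw [hP, hq, hQ, Matrix.sub_mulVec, Matrix.one_mulVec]
    rw [hPp, Matrix.mulVec_sub, dotProduct_sub, sub_dotProduct,
      sub_dotProduct, hAq, hAq']
    ring
  · have := hginv.posSemidef.dotProduct_mulVec_nonneg q
    simpa using this
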